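/- If a discrete form Ω : ℤ⁴ → Cl satisfies equation (3.17): −DΩ = mΩe, then the form Ωe₁e₂e₃ satisfies the same equation with the sign of the mass term reversed: −D(Ωe₁e₂e₃) = −m(Ωe₁e₂e₃)e. -/
import Mathlib

noncomputable section

/-- The Minkowski quadratic form `Q v = v₀² − v₁² − v₂² − v₃²` on `ℂ⁴`. -/
def Q : QuadraticForm ℂ (Fin 4 → ℂ) :=
  QuadraticMap.weightedSumSquares ℂ ![(1 : ℂ), -1, -1, -1]

/-- The Clifford algebra of spacetime over `ℂ`. -/
abbrev Cl : Type := CliffordAlgebra Q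

/-- The generators `e_μ`, images of the standard basis vectors. -/
def e (μ : Fin 4) : Cl := CliffordAlgebra.ι Q (Pi.single μ 1)

/-- The volume element `e = e₀e₁e₂e₃`. -/
def eV : Cl := e 0 * e 1 * e 2 * e 3

/-- The difference operator `(Δ_μ Ω)(k) = Ω(k + 1_μ) − Ω(k)`. -/
def Δ (μ : Fin 4) (Ω : (Fin 4 → ℤ) → Cl) : (Fin 4 → ℤ) → Cl :=
  fun k => Ω (k + Pi.single μ 1) - Ω k

/-- The discrete Dirac operator `DΩ = Σ_μ e_μ · (Δ_μ Ω)`. -/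
def Dirac (Ω : (Fin 4 → ℤ) → Cl) : (Fin 4 → ℤ) → Cl :=
  fun k => ∑ μ : Fin 4, e μ * Δ μ Ω k

lemma hQ (μ : Fin 4) : Q (Pi.single μ 1) = ![(1 : ℂ), -1, -1, -1] μ := by
  simp [Q, QuadraticMap.weightedSumSquares_apply, Pi.single_apply]

lemma hsq (μ : Fin 4) : e μ * e μ = algebraMap ℂ Cl (![(1 : ℂ), -1, -1, -1] μ) := by
  rw [e, CliffordAlgebra.ι_sq_scalar, hQ]

lemma hac {μ ν : Fin 4} (h : μ ≠ ν) : e μ * e ν = -(e ν * e μ) := by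
  have := CliffordAlgebra.ι_mul_ι_add_swap (Q := Q) (Pi.single μ 1) (Pi.single ν 1)
  have hp : QuadraticMap.polar Q (Pi.single μ 1) (Pi.single ν 1) = 0 := by
    fin_cases μ <;> fin_cases ν <;>
      simp_all [QuadraticMap.polar, Q, QuadraticMap.weightedSumSquares_apply, Pi.single_apply,
        Fin.sum_univ_four]
  rw [hp, map_zero] at this
  exact eq_neg_of_add_eq_zero_left this

lemma sw {μ ν : Fin 4} (h : μ ≠ ν) (a : Cl) : e μ * (e ν * a) = -(e ν * (e μ * a)) := by
  rw [← mul_assoc, hac h, neg_mul, mul_assoc]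

lemma sq' (μ : Fin 4) (a : Cl) : e μ * (e μ * a) = ![(1 : ℂ), -1, -1, -1] μ • a := by
  rw [← mul_assoc, hsq, Algebra.smul_def]

lemma s21 (a : Cl) : e 2 * (e 1 * a) = -(e 1 * (e 2 * a)) := sw (by decide) a
lemma s31 (a : Cl) : e 3 * (e 1 * a) = -(e 1 * (e 3 * a)) := sw (by decide) a
lemma s32 (a : Cl) : e 3 * (e 2 * a) = -(e 2 * (e 3 * a)) := sw (by decide) a
lemma s10 (a : Cl) : e 1 * (e 0 * a) = -(e 0 * (e 1 * a)) := sw (by decide) a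
lemma s20 (a : Cl) : e 2 * (e 0 * a) = -(e 0 * (e 2 * a)) := sw (by decide) a
lemma s30 (a : Cl) : e 3 * (e 0 * a) = -(e 0 * (e 3 * a)) := sw (by decide) a
lemma q1 (a : Cl) : e 1 * (e 1 * a) = -a := by rw [sq']; simp
lemma q2 (a : Cl) : e 2 * (e 2 * a) = -a := by rw [sq']; simp
lemma q3 (a : Cl) : e 3 * (e 3 * a) = -a := by rw [sq']; simp
lemma h3sq : e 3 * e 3 = -1 := by rw [hsq]; simp

lemma key : eV * (e 1 * e 2 * e 3) = -((e 1 * e 2 * e 3) * eV) := by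
  simp [eV, mul_assoc, s21, s31, s32, s10, s20, s30, q1, q2, q3, h3sq]

/-- If `Ω` satisfies equation (3.17): `−DΩ = mΩe`, then `Ωe₁e₂e₃` satisfies the
same equation with the sign of the mass term reversed. -/
theorem stmt_15 (m : ℝ) (Ω : (Fin 4 → ℤ) → Cl)
    (hΩ : ∀ k, -(Dirac Ω k) = (m : ℂ) • (Ω k * eV)) :
    ∀ k, -(Dirac (fun k => Ω k * (e 1 * e 2 * e 3)) k) =
      -((m : ℂ) • ((Ω k * (e 1 * e 2 * e 3)) * eV)) := by
  intro k
  set c : Cl := e 1 * e 2 * e 3 with hc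
  have hD : Dirac (fun k => Ω k * c) k = Dirac Ω k * c := by
    simp only [Dirac, Δ]
    rw [Finset.sum_mul]
    refine Finset.sum_congr rfl fun μ _ => ?_
    noncomm_ring
  rw [hD, ← neg_mul, hΩ k, Algebra.smul_def, Algebra.smul_def, mul_assoc, mul_assoc, key]
  rw [hc]; noncomm_ring
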